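/- Let M be a compact connected oriented 4-manifold and π : P → M a principal SU(2)-bundle. Then the Gysin pushforward π_* : H⁷(P;ℤ) → H⁴(M;ℤ) is an isomorphism. Consequently, for every pair (P, H) with H ∈ H⁷(P;ℤ) there is a unique (up to isomorphism) spherical T-dual pair (P̂, Ĥ): P̂ is the unique principal SU(2)-bundle with c₂(P̂) = π_*H and Ĥ = (π̂_*)^{-1}(c₂(P)), i.e. the T-duality map is (c₂(P), H) ↦ (π_*H, (π̂_*)^{-1}c₂(P)). -/
import Mathlib


/-!
# Spherical T-duality over a 4-manifold exists and is unique
(Bouwknegt–Evslin–Mathai, Section 3.5)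

Let `M` be a compact connected oriented 4-manifold and `π : P → M` a principal
`SU(2)`-bundle.  Then the Gysin pushforward `π_* : H⁷(P;ℤ) → H⁴(M;ℤ)` is an isomorphism.
Consequently every pair `(P, H)` with `H ∈ H⁷(P;ℤ)` has a unique (up to isomorphism)
spherical T-dual pair `(P̂, Ĥ)`:  `P̂` is the unique principal `SU(2)`-bundle with
`c₂(P̂) = π_* H`, and `Ĥ = (π̂_*)⁻¹(c₂(P))`.

Bundles and cohomology are not available in Mathlib; the structure below records: the set
of isomorphism classes of principal `SU(2)`-bundles over `M` (classified by
`c₂ ∈ H⁴(M;ℤ)`, which holds over a compact oriented 4-manifold), the groups `H⁷` of the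
total spaces, and the Gysin sequence
`H⁷(M) → H⁷(P) → H⁴(M) → H⁸(M)` of each bundle, where `H⁷(M;ℤ) = H⁸(M;ℤ) = 0`
since `dim M = 4`. -/
structure FourManifoldSU2Data where
  /-- `H⁴(M;ℤ)` -/
  H4M : Type
  [g4 : AddCommGroup H4M]
  /-- `H⁷(M;ℤ)`, which vanishes since `dim M = 4` -/
  H7M : Type
  [g7M : AddCommGroup H7M]
  h7M_trivial : Subsingleton H7M
  /-- `H⁸(M;ℤ)`, which vanishes since `dim M = 4` -/
  H8M : Type
  [g8M : AddCommGroup H8M]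
  h8M_trivial : Subsingleton H8M
  /-- the set of isomorphism classes of principal `SU(2)`-bundles over `M` -/
  Bun : Type
  /-- the second Chern class of a principal `SU(2)`-bundle -/
  chern : Bun → H4M
  /-- over a compact oriented 4-manifold, principal `SU(2)`-bundles are classified up to
  isomorphism by their second Chern class -/
  chern_bij : Function.Bijective chern
  /-- `H⁷(P;ℤ)` of the total space of the bundle `b` -/
  H7 : Bun → Type
  [g7 : ∀ b, AddCommGroup (H7 b)]
  /-- the pullback `π^* : H⁷(M) → H⁷(P)` -/
  pull7 : ∀ b, H7M →+ H7 b
  /-- the Gysin pushforward `π_* : H⁷(P) → H⁴(M)` (integration over the fiber) -/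
  push7 : ∀ b, H7 b →+ H4M
  /-- the cup product `c₂(b) ∪ · : H⁴(M) → H⁸(M)` -/
  cupc2 : ∀ b : Bun, H4M →+ H8M
  /-- Gysin exactness at `H⁷(P)`: `Ker π_* = Im π^*` -/
  exact_at_P : ∀ (b : Bun) (x : H7 b), push7 b x = 0 ↔ ∃ y : H7M, pull7 b y = x
  /-- Gysin exactness at `H⁴(M)`: `Im π_* = Ker (c₂ ∪ ·)` -/
  exact_at_M : ∀ (b : Bun) (y : H4M), cupc2 b y = 0 ↔ ∃ x : H7 b, push7 b x = y

attribute [instance] FourManifoldSU2Data.g4 FourManifoldSU2Data.g7M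
  FourManifoldSU2Data.g8M FourManifoldSU2Data.g7

/-- **Over a compact connected oriented 4-manifold, `π_* : H⁷(P;ℤ) → H⁴(M;ℤ)` is an
isomorphism and every pair `(P, H)` has a unique spherical T-dual**:  the T-duality map is
`(c₂(P), H) ↦ (π_* H, (π̂_*)⁻¹ c₂(P))`, i.e. the dual pair `(P̂, Ĥ)` is uniquely
determined by `c₂(P̂) = π_* H` and `π̂_* Ĥ = c₂(P)`. -/
theorem spherical_T_duality_dim_four (D : FourManifoldSU2Data) :
    (∀ b : D.Bun, Function.Bijective (D.push7 b)) ∧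
    ∀ (b : D.Bun) (H : D.H7 b),
      ∃! q : Σ bhat : D.Bun, D.H7 bhat,
        D.chern q.1 = D.push7 b H ∧ D.push7 q.1 q.2 = D.chern b := by
  have hbij : ∀ b : D.Bun, Function.Bijective (D.push7 b) := by
    intro b
    constructor
    · intro x y hxy
      have h : D.push7 b (x - y) = 0 := by simp [hxy]
      obtain ⟨z, hz⟩ := (D.exact_at_P b (x - y)).mp h
      have hz0 : z = 0 := @Subsingleton.elim _ D.h7M_trivial _ _
      rw [hz0, map_zero] at hz
      exact sub_eq_zero.mp hz.symm
    · intro y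
      have : D.cupc2 b y = 0 := @Subsingleton.elim _ D.h8M_trivial _ _
      exact (D.exact_at_M b y).mp this
  refine ⟨hbij, fun b H => ?_⟩
  obtain ⟨bhat, hbhat⟩ := D.chern_bij.2 (D.push7 b H)
  obtain ⟨Hhat, hHhat⟩ := (hbij bhat).2 (D.chern b)
  refine ⟨⟨bhat, Hhat⟩, ⟨hbhat, hHhat⟩, ?_⟩
  rintro ⟨b', H'⟩ ⟨h1, h2⟩
  have hb : b' = bhat := D.chern_bij.1 (by rw [h1, hbhat])
  subst hb
  have : H' = Hhat := (hbij b').1 (by rw [h2, hHhat])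
  simp [this]
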